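/- Let C be a decomposition of the de Bruijn graph dB(n) into vertex-disjoint cycles covering all vertices, and let G = dB(n)/C be the quotient graph with an arc (X,Y) whenever there is a de Bruijn arc from a vertex of cycle X to a vertex of cycle Y. Then G is symmetric: (X,Y) is an arc of G if and only if (Y,X) is. -/
import Mathlib


/-- De Bruijn arc over alphabet `Σ'`: there are `a, b, u` with `f = au`, `g = ub`,
i.e. `g i = f (i+1)` for all `i < n - 1`. -/
def dBArc {α : Type*} (n : ℕ) (f g : Fin n → α) : Prop :=
  ∀ i : Fin n, (h : i.val + 1 < n) → g i = f ⟨i.val + 1, h⟩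

/-- A set `X` of vertices is a (directed) cycle of the de Bruijn graph: its elements can
be arranged cyclically, without repetition, with consecutive elements joined by arcs. -/
def IsDBCycle {α : Type*} (n : ℕ) (X : Set (Fin n → α)) : Prop :=
  ∃ m : ℕ, 0 < m ∧ ∃ c : ZMod m → (Fin n → α),
    Function.Injective c ∧ Set.range c = X ∧ ∀ i : ZMod m, dBArc n (c i) (c (i + 1))

/-- Arc relation of the quotient graph of the de Bruijn graph by a family of cycles. -/
def quotientArc {α : Type*} (n : ℕ) (X Y : Set (Fin n → α)) : Prop :=
  ∃ x ∈ X, ∃ y ∈ Y, dBArc n x y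

lemma dBArc_rect {α : Type*} {n : ℕ} {f f' g g' : Fin n → α}
    (h1 : dBArc n f g) (h2 : dBArc n f g') (h3 : dBArc n f' g') : dBArc n f' g :=
  fun i hi => (h1 i hi).trans ((h2 i hi).symm.trans (h3 i hi))

lemma exists_succ {α : Type*} (n : ℕ) (C : Set (Set (Fin n → α)))
    (hcyc : ∀ X ∈ C, IsDBCycle n X)
    (hdisj : ∀ X ∈ C, ∀ Y ∈ C, X ≠ Y → Disjoint X Y)
    (hne : Nonempty (Fin n → α))
    (hcover : ∀ v : Fin n → α, ∃ X ∈ C, v ∈ X) :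
    ∃ σ : (Fin n → α) → (Fin n → α), Function.Injective σ ∧
      (∀ v, dBArc n v (σ v)) ∧ (∀ v X, X ∈ C → v ∈ X → σ v ∈ X) := by
  classical
  have key : ∀ X : Set (Fin n → α), ∃ (m : ℕ) (c : ZMod m → (Fin n → α)),
      X ∈ C → (Function.Injective c ∧ Set.range c = X ∧
        ∀ i : ZMod m, dBArc n (c i) (c (i + 1))) := by
    intro X
    by_cases hX : X ∈ C
    · obtain ⟨m, hm, c, h1, h2, h3⟩ := hcyc X hX
      exact ⟨m, c, fun _ => ⟨h1, h2, h3⟩⟩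
    · exact ⟨1, fun _ => Classical.arbitrary _, fun h => absurd h hX⟩
  choose m c hc using key
  choose cyc hcycC hmemcyc using hcover
  have huniq : ∀ v X, X ∈ C → v ∈ X → X = cyc v := by
    intro v X hX hv
    by_contra h
    exact (hdisj X hX (cyc v) (hcycC v) h).ne_of_mem hv (hmemcyc v) rfl
  set σ : (Fin n → α) → (Fin n → α) := fun v =>
    c (cyc v) (Function.invFun (c (cyc v)) v + 1) with hσdef
  have hmemrange : ∀ v, v ∈ Set.range (c (cyc v)) := by
    intro v; rw [(hc (cyc v) (hcycC v)).2.1]; exact hmemcyc v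
  have hinvc : ∀ v, c (cyc v) (Function.invFun (c (cyc v)) v) = v :=
    fun v => Function.invFun_eq (hmemrange v)
  have hσmem : ∀ v, σ v ∈ cyc v := by
    intro v
    rw [← (hc (cyc v) (hcycC v)).2.1]
    exact ⟨_, rfl⟩
  refine ⟨σ, ?_, ?_, ?_⟩
  · intro v w h
    have e : cyc v = cyc w := by
      have h1 := huniq (σ v) (cyc v) (hcycC v) (hσmem v)
      have h2 := huniq (σ w) (cyc w) (hcycC w) (hσmem w)
      rw [h] at h1
      exact h1.trans h2.symm
    have hinj := (hc (cyc v) (hcycC v)).1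
    simp only [hσdef] at h
    rw [← e] at h
    have h2 := add_right_cancel (hinj h)
    have h3 := congrArg (c (cyc v)) h2
    rw [hinvc v] at h3
    refine h3.trans (Function.invFun_eq ?_)
    show w ∈ Set.range (c (cyc v))
    rw [(hc (cyc v) (hcycC v)).2.1, e]
    exact hmemcyc w
  · intro v
    have harc := (hc (cyc v) (hcycC v)).2.2 (Function.invFun (c (cyc v)) v)
    rw [hinvc v] at harc
    exact harc
  · intro v X hX hv
    exact (huniq v X hX hv) ▸ hσmem v

theorem quotient_graph_symmetric {α : Type*} [Fintype α] (n : ℕ)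
    (C : Set (Set (Fin n → α)))
    (hcyc : ∀ X ∈ C, IsDBCycle n X)
    (hdisj : ∀ X ∈ C, ∀ Y ∈ C, X ≠ Y → Disjoint X Y)
    (hcover : ∀ v : Fin n → α, ∃ X ∈ C, v ∈ X) :
    ∀ X ∈ C, ∀ Y ∈ C, (quotientArc n X Y ↔ quotientArc n Y X) := by
  classical
  have main : ∀ X ∈ C, ∀ Y ∈ C, quotientArc n X Y → quotientArc n Y X := by
    rintro X hX Y hY ⟨x, hx, y, hy, hxy⟩
    by_cases hn : n = 0
    · subst hn; exact ⟨y, hy, x, hx, fun i _ => i.elim0⟩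
    have hn' : 0 < n := Nat.pos_of_ne_zero hn
    obtain ⟨σ, hσinj, hσarc, hσmem⟩ := exists_succ n C hcyc hdisj ⟨x⟩ hcover
    set x' := σ x with hx'def
    have hx'X : x' ∈ X := hσmem x X hX hx
    set A : Set (Fin n → α) := {f | dBArc n f x'} with hA
    set B : Set (Fin n → α) := {g | dBArc n x g} with hB
    have hmap : ∀ f ∈ A, σ f ∈ B := fun f hf => dBArc_rect (hσarc f) hf (hσarc x)
    have hyB : y ∈ B := hxy
    have eA : ↥A ≃ α := by
      refine {
        toFun := fun f => f.1 ⟨0, hn'⟩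
        invFun := fun a => ⟨fun k => if h : k.val = 0 then a
          else x' ⟨k.val - 1, by omega⟩, ?_⟩
        left_inv := ?_
        right_inv := ?_ }
      · intro i hi
        simp only
        rw [dif_neg (by omega)]
        exact congrArg x' (Fin.ext (by simp))
      · rintro ⟨f, hf⟩
        apply Subtype.ext
        funext k
        simp only
        split_ifs with h
        · have hk : k = ⟨0, hn'⟩ := Fin.ext h
          rw [hk]
        · have hk : (k.val - 1) + 1 < n := by omega
          have h2 := hf ⟨k.val - 1, by omega⟩ hk
          rw [h2]
          exact congrArg f (Fin.ext (by simp; omega))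
      · intro a
        simp
    have eB : ↥B ≃ α := by
      refine {
        toFun := fun g => g.1 ⟨n - 1, by omega⟩
        invFun := fun a => ⟨fun k => if h : k.val + 1 < n then x ⟨k.val + 1, h⟩
          else a, ?_⟩
        left_inv := ?_
        right_inv := ?_ }
      · intro i hi
        simp only
        rw [dif_pos hi]
      · rintro ⟨g, hg⟩
        apply Subtype.ext
        funext k
        simp only
        split_ifs with h
        · exact (hg k h).symm
        · exact congrArg g (Fin.ext (by simp; omega))
      · intro a
        simp only
        rw [dif_neg (by simp; omega)]
    haveI : Fintype ↥A := Fintype.ofFinite _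
    haveI : Fintype ↥B := Fintype.ofFinite _
    have hcard : Fintype.card ↥A = Fintype.card ↥B := by
      rw [Fintype.card_congr eA, Fintype.card_congr eB]
    have hσ' : Function.Surjective (fun f : ↥A => (⟨σ f.1, hmap f.1 f.2⟩ : ↥B)) := by
      have hinj : Function.Injective (fun f : ↥A => (⟨σ f.1, hmap f.1 f.2⟩ : ↥B)) :=
        fun f g h => Subtype.ext (hσinj (congrArg Subtype.val h))
      exact ((Fintype.bijective_iff_injective_and_card _).mpr ⟨hinj, hcard⟩).2
    obtain ⟨⟨w, hwA⟩, hw⟩ := hσ' ⟨y, hyB⟩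
    have hσw : σ w = y := congrArg Subtype.val hw
    obtain ⟨Z, hZ, hwZ⟩ := hcover w
    have hσwZ : σ w ∈ Z := hσmem w Z hZ hwZ
    have hZY : Z = Y := by
      by_contra h
      exact (hdisj Z hZ Y hY h).ne_of_mem hσwZ hy hσw
    exact ⟨w, hZY ▸ hwZ, x', hx'X, hwA⟩
  exact fun X hX Y hY => ⟨main X hX Y hY, main Y hY X hX⟩
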